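/- Let G be a group in which the derived subgroup [G,G] is the normal closure of a single element g of order dividing 2. Then there is no surjective group homomorphism from G onto the infinite dihedral group ℤ/2 * ℤ/2. -/

import Mathlib

/-- The infinite dihedral group as the free product ℤ/2 * ℤ/2. -/
abbrev Dinf : Type := Monoid.Coprod (Multiplicative (ZMod 2)) (Multiplicative (ZMod 2))

open Monoid Equiv
open scoped commutatorElement

/-- Homomorphism from `Multiplicative (ZMod 2)` sending the generator to an element of
order dividing 2. -/
def homOfSq {P : Type*} [Group P] (e : P) (he : e ^ 2 = 1) :
    Multiplicative (ZMod 2) →* P where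
  toFun x := e ^ (Multiplicative.toAdd x).val
  map_one' := by simp
  map_mul' x y := by
    have hd : orderOf e ∣ 2 := orderOf_dvd_of_pow_eq_one he
    rw [← pow_add, pow_eq_pow_iff_modEq]
    refine Nat.ModEq.of_dvd hd ?_
    show (Multiplicative.toAdd x + Multiplicative.toAdd y).val
        ≡ (Multiplicative.toAdd x).val + (Multiplicative.toAdd y).val [MOD 2]
    rw [ZMod.val_add]
    exact Nat.mod_modEq _ 2

@[simp] lemma homOfSq_gen {P : Type*} [Group P] (e : P) (he : e ^ 2 = 1) :
    homOfSq e he (Multiplicative.ofAdd 1) = e := by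
  show e ^ ZMod.val (1 : ZMod 2) = e
  rw [ZMod.val_one, pow_one]

namespace DinfAux

def a : Dinf := Coprod.inl (Multiplicative.ofAdd 1)
def b : Dinf := Coprod.inr (Multiplicative.ofAdd 1)
def c : Dinf := a * b

lemma sq_zmod : ∀ m : Multiplicative (ZMod 2), m * m = 1 := by decide

lemma zmod_cases : ∀ m : Multiplicative (ZMod 2), m = 1 ∨ m = Multiplicative.ofAdd 1 := by
  decide

lemma ha : a * a = 1 := by rw [a, ← map_mul, sq_zmod, map_one]

lemma hb : b * b = 1 := by rw [b, ← map_mul, sq_zmod, map_one]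

lemma a_inv : a⁻¹ = a := by rw [eq_comm, eq_inv_iff_mul_eq_one, ha]

lemma b_inv : b⁻¹ = b := by rw [eq_comm, eq_inv_iff_mul_eq_one, hb]

lemma c_inv : c⁻¹ = b * a := by rw [c, mul_inv_rev, a_inv, b_inv]

lemma conj_c : a * c * a⁻¹ = c⁻¹ := by
  rw [c_inv, a_inv, c, ← mul_assoc, ha, one_mul]

lemma conj_c_zpow (n : ℤ) : a * c ^ n * a⁻¹ = c ^ (-n) := by
  rw [← conj_zpow, conj_c, inv_zpow, zpow_neg]

lemma a_mul_c_zpow (n : ℤ) : a * c ^ n = c ^ (-n) * a := by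
  have := conj_c_zpow n
  rw [a_inv] at this
  calc a * c ^ n = a * c ^ n * a * a := by rw [mul_assoc, ha, mul_one]
  _ = c ^ (-n) * a := by rw [this]

/-- Every element of `Dinf` is `c ^ n` or `c ^ n * a`. -/
lemma structure_thm (x : Dinf) : ∃ n : ℤ, x = c ^ n ∨ x = c ^ n * a := by
  induction x using Coprod.induction_on' with
  | one => exact ⟨0, Or.inl (by simp)⟩
  | inl_mul m x ih =>
    obtain ⟨n, h | h⟩ := ih
    · rcases zmod_cases m with rfl | rfl
      · exact ⟨n, Or.inl (by simp [h])⟩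
      · exact ⟨-n, Or.inr (by rw [h, ← a, a_mul_c_zpow])⟩
    · rcases zmod_cases m with rfl | rfl
      · exact ⟨n, Or.inr (by simp [h])⟩
      · refine ⟨-n, Or.inl ?_⟩
        rw [h, ← a, ← mul_assoc, a_mul_c_zpow, mul_assoc, ha, mul_one]
  | inr_mul m x ih =>
    obtain ⟨n, h | h⟩ := ih
    · rcases zmod_cases m with rfl | rfl
      · exact ⟨n, Or.inl (by simp [h])⟩
      · refine ⟨-(n+1), Or.inr ?_⟩
        have : (Coprod.inr (Multiplicative.ofAdd 1) : Dinf) = a * c := by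
          rw [c, ← mul_assoc, ha, one_mul, b]
        rw [h, this, mul_assoc, ← zpow_one_add, a_mul_c_zpow, add_comm]
    · rcases zmod_cases m with rfl | rfl
      · exact ⟨n, Or.inr (by simp [h])⟩
      · refine ⟨-(n+1), Or.inl ?_⟩
        have : (Coprod.inr (Multiplicative.ofAdd 1) : Dinf) = a * c := by
          rw [c, ← mul_assoc, ha, one_mul, b]
        rw [h, this, ← mul_assoc, mul_assoc a _ _, ← zpow_one_add, a_mul_c_zpow,
          mul_assoc, ha, mul_one, add_comm]

/-- The sign homomorphism. -/
def s : Dinf →* Multiplicative (ZMod 2) :=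
  Coprod.lift (MonoidHom.id _) (MonoidHom.id _)

lemma s_a : s a = Multiplicative.ofAdd 1 := by
  rw [a, s, Coprod.lift_apply_inl, MonoidHom.id_apply]

lemma s_b : s b = Multiplicative.ofAdd 1 := by
  rw [b, s, Coprod.lift_apply_inr, MonoidHom.id_apply]

lemma s_c : s c = 1 := by rw [c, map_mul, s_a, s_b, sq_zmod]

lemma neg_sq : (Equiv.neg ℤ) ^ 2 = 1 := by
  ext x; simp [sq]

lemma subLeft_sq : (Equiv.subLeft (1 : ℤ)) ^ 2 = 1 := by
  ext x; simp [sq]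

/-- Faithful-enough action on ℤ. -/
def ψ : Dinf →* Equiv.Perm ℤ :=
  Coprod.lift (homOfSq (Equiv.neg ℤ) neg_sq) (homOfSq (Equiv.subLeft 1) subLeft_sq)

lemma ψ_c : ψ c = Equiv.addRight (-1 : ℤ) := by
  rw [c, map_mul, a, b, ψ, Coprod.lift_apply_inl, Coprod.lift_apply_inr,
    homOfSq_gen, homOfSq_gen]
  ext x
  simp [Equiv.Perm.mul_apply]
  ring

lemma ψ_c_zpow (n : ℤ) : ψ (c ^ n) = Equiv.addRight (-n : ℤ) := by
  have zpow_addRight : ∀ m : ℤ, (Equiv.addRight (-1 : ℤ)) ^ m = Equiv.addRight (m • (-1 : ℤ)) := by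
    intro m
    induction m using Int.induction_on with
    | zero => ext x; simp
    | succ k ih => rw [zpow_add_one, ih]; ext x; simp [Equiv.Perm.mul_apply, add_smul]
    | pred k ih => rw [zpow_sub_one, ih]; ext x; simp [Equiv.Perm.inv_def, sub_smul]
  rw [map_zpow, ψ_c, zpow_addRight]
  congr 1
  simp

/-- The key torsion lemma: an element of order dividing 2 in the kernel of `s` is trivial. -/
lemma torsion_lemma (x : Dinf) (hx : x * x = 1) (hs : s x = 1) : x = 1 := by
  obtain ⟨n, h | h⟩ := structure_thm x
  · subst h
    have h2 : ψ (c ^ n * c ^ n) = 1 := by rw [hx, map_one]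
    rw [map_mul, ψ_c_zpow] at h2
    have h3 := congrArg (fun e : Equiv.Perm ℤ => e 0) h2
    simp [Equiv.Perm.mul_apply] at h3
    rw [h3]
    simp
  · exfalso
    rw [h, map_mul, map_zpow, s_c, one_zpow, one_mul, s_a] at hs
    exact absurd hs (by decide)

lemma ab_ne_ba : a * b ≠ b * a := by
  intro h
  have := congrArg (fun x : Dinf => ψ x 0) h
  simp only [map_mul, Equiv.Perm.mul_apply] at this
  rw [a, b, ψ, Coprod.lift_apply_inl, Coprod.lift_apply_inr, homOfSq_gen, homOfSq_gen] at this
  simp at this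

end DinfAux

theorem stmt7 {G : Type*} [Group G] (g : G) (hg : g ^ 2 = 1)
    (hG : commutator G = Subgroup.normalClosure {g}) :
    ¬∃ φ : G →* Dinf, Function.Surjective φ := by
  rintro ⟨φ, hφ⟩
  -- φ g has order dividing 2 and trivial sign
  have hg_comm : g ∈ commutator G := by
    rw [hG]; exact Subgroup.subset_normalClosure (Set.mem_singleton g)
  have hsφ : (DinfAux.s.comp φ) g = 1 := by
    have := Abelianization.commutator_subset_ker (DinfAux.s.comp φ) hg_comm
    exact this
  have hφg : φ g = 1 := by
    apply DinfAux.torsion_lemma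
    · rw [← map_mul, ← sq, hg, map_one]
    · exact hsφ
  -- hence commutator G ≤ ker φ
  have hker : commutator G ≤ φ.ker := by
    rw [hG]
    exact Subgroup.normalClosure_le_normal (by simpa [MonoidHom.mem_ker] using hφg)
  -- so the image of φ is abelian; but φ is surjective and Dinf is not abelian
  obtain ⟨u, hu⟩ := hφ DinfAux.a
  obtain ⟨v, hv⟩ := hφ DinfAux.b
  have hcomm : ⁅u, v⁆ ∈ commutator G :=
    Subgroup.commutator_mem_commutator (Subgroup.mem_top u) (Subgroup.mem_top v)
  have : φ ⁅u, v⁆ = 1 := hker hcomm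
  rw [map_commutatorElement, hu, hv, commutatorElement_eq_one_iff_mul_comm] at this
  exact DinfAux.ab_ne_ba this
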